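/- arXiv:math/0608715 — 3 statements merged into one kernel-verified Lean document; each statement's English description precedes it below -/
import Mathlib

section
/- Let r ≥ 1 be an integer. For every chain-type d = (d_1,…,d_m) of degree at most r there exists a GI-type (I,J) for rank r with Φ_r(I,J) = d; that is, the map Φ_r from GI-types for rank r to chain-types of degree at most r is surjective. -/
/-- Minimum of a finite set of naturals, with the convention that `min ∅ = r`. -/
def minD (r : ℕ) (S : Finset ℕ) : ℕ := if h : S.Nonempty then S.min' h else r

/-- `(I, J)` is a GI-type for rank `r`: both are subsets of `{0,…,r-1}` and
`min I + min J ≥ r` (with `min ∅ = r`). -/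
def IsGIType (r : ℕ) (I J : Finset ℕ) : Prop :=
  I ⊆ Finset.range r ∧ J ⊆ Finset.range r ∧ r ≤ minD r I + minD r J

/-- For `S = {i₁ < … < i_p}`, the list of successive differences
`(i₂ - i₁, …, i_p - i_{p-1}, r - i_p)` of the list `(i₁, …, i_p, r)`. -/
def diffs (r : ℕ) (S : Finset ℕ) : List ℕ :=
  List.zipWith (fun a b => b - a) (S.sort (· ≤ ·) ++ [r]) ((S.sort (· ≤ ·) ++ [r]).tail)

/-- The tuple `Φ_r(I,J) = (d₁,…,d_{p+q})` associated to a GI-type `(I,J)`: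
for `I = {i₁ < … < i_p}`, `J = {j₁ < … < j_q}`, it is given by
`d_m = i_{m+1} - i_m` for `1 ≤ m ≤ p` (with `i_{p+1} := r`) and
`d_m = j_{p+q-m+2} - j_{p+q-m+1}` for `p+1 ≤ m ≤ p+q` (with `j_{q+1} := r`). -/
def Phi (r : ℕ) (I J : Finset ℕ) : List ℕ := diffs r I ++ (diffs r J).reverse


lemma le_of_mem_scanl (d : List ℕ) (s x : ℕ) (hx : x ∈ d.scanl (· + ·) s) : s ≤ x := by
  induction d generalizing s with
  | nil => simp at hx; omega
  | cons a t ih =>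
    simp [List.scanl] at hx
    rcases hx with h | h
    · omega
    · have := ih (s + a) h; omega

lemma sorted_scanl (d : List ℕ) (s : ℕ) (hpos : ∀ x ∈ d, 1 ≤ x) :
    (d.scanl (· + ·) s).Pairwise (· < ·) := by
  induction d generalizing s with
  | nil => simp [List.scanl]
  | cons a t ih =>
    simp only [List.scanl_cons, List.pairwise_cons]
    refine ⟨fun x hx => ?_, ih (s + a) (fun x hx => hpos x (by simp [hx]))⟩
    have := le_of_mem_scanl t (s + a) x hx
    have := hpos a (by simp); omega

lemma zip_scanl (d : List ℕ) (s : ℕ) :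
    List.zipWith (fun a b => b - a) (d.scanl (· + ·) s) ((d.scanl (· + ·) s).tail) = d := by
  induction d generalizing s with
  | nil => simp [List.scanl]
  | cons a t ih =>
    rw [List.scanl_cons]
    obtain ⟨b, L, ht⟩ : ∃ b L, t.scanl (· + ·) (s + a) = b :: L := by
      cases h : t.scanl (· + ·) (s + a) with
      | nil => exact absurd h (by simp [← List.length_eq_zero_iff, List.length_scanl])
      | cons b L => exact ⟨b, L, rfl⟩
    have hb : b = s + a := by
      cases t with
      | nil => simp [List.scanl] at ht; omega
      | cons c u => rw [List.scanl_cons] at ht; simp at ht; omega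
    have h := ih (s + a)
    rw [ht] at h
    simp only [List.tail_cons] at h
    subst hb
    rw [ht]
    simp only [List.singleton_append, List.tail_cons, List.zipWith_cons_cons, h,
      Nat.add_sub_cancel_left]

lemma dropLast_scanl (d : List ℕ) (s : ℕ) :
    (d.scanl (· + ·) s).dropLast ++ [s + d.sum] = d.scanl (· + ·) s := by
  induction d generalizing s with
  | nil => simp [List.scanl]
  | cons a t ih =>
    have h := ih (s + a)
    simp only [List.scanl_cons, List.sum_cons]
    have hne : t.scanl (· + ·) (s + a) ≠ [] := by
      simp [← List.length_eq_zero_iff, List.length_scanl]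
    rw [List.dropLast_cons_of_ne_nil hne]
    simp only [List.cons_append, ← Nat.add_assoc]
    rw [h]

theorem phi_surjective (r : ℕ) (hr : 1 ≤ r) (d : List ℕ)
    (hpos : ∀ x ∈ d, 1 ≤ x) (hdeg : d.sum ≤ r) :
    ∃ I J : Finset ℕ, IsGIType r I J ∧ Phi r I J = d := by
  set s := r - d.sum with hs
  set full := d.scanl (· + ·) s with hfull
  set L := full.dropLast with hL
  have hsum : s + d.sum = r := by omega
  have hsplit : L ++ [r] = full := by
    rw [hL, hfull, ← hsum]; exact dropLast_scanl d s
  have hsortedfull : full.Pairwise (· < ·) := sorted_scanl d s hpos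
  have hsortedL : L.Pairwise (· < ·) := hsortedfull.sublist (List.dropLast_sublist full)
  have hnodup : L.Nodup := hsortedL.nodup
  have hlt : ∀ x ∈ L, x < r := by
    intro x hx
    exact (List.pairwise_append.mp (hsplit ▸ hsortedfull)).2.2 x hx r (by simp)
  refine ⟨L.toFinset, ∅, ⟨?_, ?_, ?_⟩, ?_⟩
  · intro x hx
    rw [List.mem_toFinset] at hx
    exact Finset.mem_range.mpr (hlt x hx)
  · simp
  · simp [minD]
  · have hsort : L.toFinset.sort (· ≤ ·) = L :=
      (List.toFinset_sort (· ≤ ·) hnodup).mpr (hsortedL.imp (fun h => le_of_lt h))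
    have hdempty : diffs r (∅ : Finset ℕ) = [] := by simp [diffs]
    rw [Phi, hdempty]
    simp only [List.reverse_nil, List.append_nil, diffs, hsort, hsplit]
    exact zip_scanl d s
end

section
/- Let r ≥ 1 be an integer and let (I,J) and (I',J') be GI-types for rank r with |I| = |I'|. If Φ_r(I,J) = Φ_r(I',J'), then I = I' and J = J'. In other words, a GI-type is uniquely determined by its associated chain-type together with the cardinality of its first member. -/
lemma getLast!_cc (a b : ℕ) (t : List ℕ) :
    (a :: b :: t).getLast! = (b :: t).getLast! := by
  rw [List.getLast!_cons_eq_getLastD, List.getLast!_cons_eq_getLastD, List.getLastD_cons]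

lemma diff_key : ∀ (l1 l2 : List ℕ), l1.Pairwise (· < ·) → l2.Pairwise (· < ·) →
    l1 ≠ [] → l2 ≠ [] → l1.getLast! = l2.getLast! →
    List.zipWith (fun a b => b - a) l1 l1.tail = List.zipWith (fun a b => b - a) l2 l2.tail →
    l1 = l2
  | [], _, _, _, h, _, _, _ => absurd rfl h
  | _, [], _, _, _, h, _, _ => absurd rfl h
  | [a], [a'], _, _, _, _, hl, _ => by
      simp [List.getLast!] at hl; simp [hl]
  | [a], a' :: b' :: t', _, _, _, _, _, hz => by simp at hz
  | a :: b :: t, [a'], _, _, _, _, _, hz => by simp at hz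
  | a :: b :: t, a' :: b' :: t', h1, h2, _, _, hl, hz => by
      simp only [List.tail_cons, List.zipWith_cons_cons, List.cons.injEq] at hz
      have hlast : (b :: t).getLast! = (b' :: t').getLast! := by
        rwa [getLast!_cc] at hl
      have ih := diff_key (b :: t) (b' :: t') (List.Pairwise.of_cons h1)
        (List.Pairwise.of_cons h2) (by simp) (by simp) hlast hz.2
      have hb : b = b' := by injection ih
      have hab : a < b := List.rel_of_pairwise_cons h1 (a' := b) (by simp)
      have hab' : a' < b' := List.rel_of_pairwise_cons h2 (a' := b') (by simp)
      have h1 := hz.1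
      have : a = a' := by omega
      simp [this, ih]

lemma sorted_aux (r : ℕ) (S : Finset ℕ) (hS : S ⊆ Finset.range r) :
    (S.sort (· ≤ ·) ++ [r]).Pairwise (· < ·) := by
  rw [List.pairwise_append]
  refine ⟨(Finset.sortedLT_sort S).pairwise, by simp, ?_⟩
  intro x hx y hy
  simp at hy
  subst hy
  exact Finset.mem_range.mp (hS ((Finset.mem_sort _).mp hx))

lemma getLast_aux (r : ℕ) (l : List ℕ) : (l ++ [r]).getLast! = r := by
  induction l with
  | nil => rfl
  | cons a t ih =>
    cases t with
    | nil => rfl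
    | cons b t' => rw [List.cons_append, List.cons_append, getLast!_cc]; exact ih

lemma diffs_inj (r : ℕ) (S S' : Finset ℕ) (hS : S ⊆ Finset.range r)
    (hS' : S' ⊆ Finset.range r) (h : diffs r S = diffs r S') : S = S' := by
  have key := diff_key (S.sort (· ≤ ·) ++ [r]) (S'.sort (· ≤ ·) ++ [r])
    (sorted_aux r S hS) (sorted_aux r S' hS') (by simp) (by simp)
    (by rw [getLast_aux, getLast_aux]) h
  have hsort : S.sort (· ≤ ·) = S'.sort (· ≤ ·) :=
    (List.append_left_injective [r]) key
  ext x
  rw [← Finset.mem_sort (α := ℕ) (· ≤ ·), hsort, Finset.mem_sort]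

lemma diffs_length (r : ℕ) (S : Finset ℕ) : (diffs r S).length = S.card := by
  simp [diffs, Finset.length_sort]

theorem phi_injective_on_card (r : ℕ) (hr : 1 ≤ r)
    (I J I' J' : Finset ℕ)
    (hIJ : IsGIType r I J) (hIJ' : IsGIType r I' J')
    (hcard : I.card = I'.card)
    (hphi : Phi r I J = Phi r I' J') :
    I = I' ∧ J = J' := by
  have hlen : (diffs r I).length = (diffs r I').length := by
    rw [diffs_length, diffs_length, hcard]
  obtain ⟨h1, h2⟩ := List.append_inj hphi hlen
  refine ⟨diffs_inj r I I' hIJ.1 hIJ'.1 h1, diffs_inj r J J' hIJ.2.1 hIJ'.2.1 ?_⟩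
  exact List.reverse_injective h2
end

section
/- Let r ≥ 1 be an integer and let d = (d_1,…,d_m) be a chain-type of degree at most r. Then the number of GI-types (I,J) for rank r with Φ_r(I,J) = d equals the number of indices p ∈ {0,1,…,m} such that d_1 + … + d_p ≤ r and d_{p+1} + … + d_m ≤ r. -/
/-- Successive differences of a list (appended with `r`). -/
def dl (r : ℕ) (l : List ℕ) : List ℕ :=
  List.zipWith (fun a b => b - a) (l ++ [r]) ((l ++ [r]).tail)

/-- Reconstruct a sorted list from its difference list. -/
def sl (r : ℕ) : List ℕ → List ℕ
  | [] => []
  | a :: L => (r - (a + L.sum)) :: sl r L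

lemma dl_nil (r : ℕ) : dl r [] = [] := rfl

lemma dl_cons (r x : ℕ) (l : List ℕ) :
    dl r (x :: l) = ((l ++ [r]).headI - x) :: dl r l := by
  cases l <;> rfl

lemma dl_length (r : ℕ) (l : List ℕ) : (dl r l).length = l.length := by
  simp [dl]

lemma sl_length (r : ℕ) (L : List ℕ) : (sl r L).length = L.length := by
  induction L with
  | nil => rfl
  | cons a M ih => simp [sl, ih]

lemma headI_sl (r : ℕ) (L : List ℕ) : (sl r L ++ [r]).headI = r - L.sum := by
  cases L <;> simp [sl]

lemma dl_sl (r : ℕ) (L : List ℕ) (hL : L.sum ≤ r) : dl r (sl r L) = L := by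
  induction L with
  | nil => rfl
  | cons a M ih =>
    have hM : M.sum ≤ r := by simp at hL; omega
    have h : a + M.sum ≤ r := by simpa using hL
    rw [sl, dl_cons, headI_sl, ih hM]
    congr 1
    omega

lemma sl_lt (r : ℕ) (L : List ℕ) (hpos : ∀ x ∈ L, 1 ≤ x) (hL : L.sum ≤ r) :
    ∀ y ∈ sl r L, y < r := by
  induction L with
  | nil => simp [sl]
  | cons a M ih =>
    intro y hy
    have ha : 1 ≤ a := hpos a (by simp)
    have h : a + M.sum ≤ r := by simpa using hL
    rcases List.mem_cons.1 hy with h' | h'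
    · omega
    · exact ih (fun x hx => hpos x (List.mem_cons_of_mem _ hx)) (by omega) y h'

lemma sl_lb (r : ℕ) (L : List ℕ) : ∀ y ∈ sl r L, r - L.sum ≤ y := by
  induction L with
  | nil => simp [sl]
  | cons a M ih =>
    intro y hy
    rcases List.mem_cons.1 hy with h' | h'
    · simp [h']
    · have := ih y h'
      simp only [List.sum_cons]
      omega

lemma sl_sorted (r : ℕ) (L : List ℕ) (hpos : ∀ x ∈ L, 1 ≤ x) (hL : L.sum ≤ r) :
    (sl r L).Pairwise (· < ·) := by
  induction L with
  | nil => simp [sl]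
  | cons a M ih =>
    have ha : 1 ≤ a := hpos a (by simp)
    have h : a + M.sum ≤ r := by simpa using hL
    rw [sl, List.pairwise_cons]
    refine ⟨fun y hy => ?_, ih (fun x hx => hpos x (List.mem_cons_of_mem _ hx)) (by omega)⟩
    have := sl_lb r M y hy
    omega

lemma dl_sum (r : ℕ) (l : List ℕ) (hl : l.Pairwise (· < ·)) (hmem : ∀ y ∈ l, y < r) :
    (dl r l).sum = r - (l ++ [r]).headI := by
  induction l with
  | nil => simp [dl_nil]
  | cons x M ih =>
    have hs := (List.pairwise_cons.1 hl)
    have hx : x < (M ++ [r]).headI ∧ (M ++ [r]).headI ≤ r := by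
      cases M with
      | nil => exact ⟨hmem x (by simp), le_rfl⟩
      | cons b t =>
        exact ⟨by simpa using hs.1 b (by simp), le_of_lt (hmem b (by simp))⟩
    rw [dl_cons, List.sum_cons, ih hs.2 (fun y hy => hmem y (List.mem_cons_of_mem _ hy))]
    have hh : ((x :: M) ++ [r]).headI = x := rfl
    rw [hh]
    omega

lemma sl_dl (r : ℕ) (l : List ℕ) (hl : l.Pairwise (· < ·)) (hmem : ∀ y ∈ l, y < r) :
    sl r (dl r l) = l := by
  induction l with
  | nil => rfl
  | cons x M ih =>
    have hs := (List.pairwise_cons.1 hl)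
    have hx : x < (M ++ [r]).headI ∧ (M ++ [r]).headI ≤ r := by
      cases M with
      | nil => exact ⟨hmem x (by simp), le_rfl⟩
      | cons b t =>
        exact ⟨by simpa using hs.1 b (by simp), le_of_lt (hmem b (by simp))⟩
    rw [dl_cons, sl, dl_sum r M hs.2 (fun y hy => hmem y (List.mem_cons_of_mem _ hy)),
      ih hs.2 (fun y hy => hmem y (List.mem_cons_of_mem _ hy))]
    congr 1
    omega

lemma dl_pos (r : ℕ) (l : List ℕ) (hl : l.Pairwise (· < ·)) (hmem : ∀ y ∈ l, y < r) :
    ∀ y ∈ dl r l, 1 ≤ y := by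
  induction l with
  | nil => simp [dl_nil]
  | cons x M ih =>
    have hs := (List.pairwise_cons.1 hl)
    have hx : x < (M ++ [r]).headI := by
      cases M with
      | nil => exact hmem x (by simp)
      | cons b t => simpa using hs.1 b (by simp)
    intro y hy
    rw [dl_cons] at hy
    rcases List.mem_cons.1 hy with h' | h'
    · omega
    · exact ih hs.2 (fun y hy => hmem y (List.mem_cons_of_mem _ hy)) y h'

lemma diffs_eq (r : ℕ) (S : Finset ℕ) : diffs r S = dl r (S.sort (· ≤ ·)) := rfl

lemma sort_sl (r : ℕ) (L : List ℕ) (hpos : ∀ x ∈ L, 1 ≤ x) (hL : L.sum ≤ r) :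
    (sl r L).toFinset.sort (· ≤ ·) = sl r L :=
  (List.toFinset_sort _ (sl_sorted r L hpos hL).nodup).2 ((sl_sorted r L hpos hL).imp le_of_lt)

lemma diffs_sl (r : ℕ) (L : List ℕ) (hpos : ∀ x ∈ L, 1 ≤ x) (hL : L.sum ≤ r) :
    diffs r (sl r L).toFinset = L := by
  rw [diffs_eq, sort_sl r L hpos hL, dl_sl r L hL]

lemma card_sl (r : ℕ) (L : List ℕ) (hpos : ∀ x ∈ L, 1 ≤ x) (hL : L.sum ≤ r) :
    (sl r L).toFinset.card = L.length := by
  rw [List.toFinset_card_of_nodup (sl_sorted r L hpos hL).nodup, sl_length]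

lemma subset_sl (r : ℕ) (L : List ℕ) (hpos : ∀ x ∈ L, 1 ≤ x) (hL : L.sum ≤ r) :
    (sl r L).toFinset ⊆ Finset.range r := by
  intro y hy
  rw [Finset.mem_range]
  exact sl_lt r L hpos hL y (List.mem_toFinset.1 hy)

lemma minD_sl (r : ℕ) (L : List ℕ) (hL : L.sum ≤ r) :
    minD r (sl r L).toFinset = r - L.sum := by
  cases L with
  | nil => simp [sl, minD]
  | cons a M =>
    have hmem : r - (a + M.sum) ∈ (sl r (a :: M)).toFinset := by simp [sl]
    have hne : (sl r (a :: M)).toFinset.Nonempty := ⟨_, hmem⟩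
    rw [minD, dif_pos hne]
    refine le_antisymm (le_trans (Finset.min'_le _ _ hmem) (by simp)) ?_
    have := sl_lb r (a :: M) _ (List.mem_toFinset.1 (Finset.min'_mem _ hne))
    simpa using this

theorem phi_fiber_card (r : ℕ) (hr : 1 ≤ r) (d : List ℕ)
    (hpos : ∀ x ∈ d, 1 ≤ x) (hdeg : d.sum ≤ r) :
    {IJ : Finset ℕ × Finset ℕ | IsGIType r IJ.1 IJ.2 ∧ Phi r IJ.1 IJ.2 = d}.ncard =
      ((Finset.range (d.length + 1)).filter
        (fun p => (d.take p).sum ≤ r ∧ (d.drop p).sum ≤ r)).card := by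
  classical
  set f : ℕ → Finset ℕ × Finset ℕ := fun p =>
    ((sl r (d.take p)).toFinset, (sl r ((d.drop p).reverse)).toFinset) with hf
  have htakepos : ∀ p, ∀ x ∈ d.take p, 1 ≤ x := fun p x hx => hpos x (List.take_subset _ _ hx)
  have hdroppos : ∀ p, ∀ x ∈ (d.drop p).reverse, 1 ≤ x := fun p x hx =>
    hpos x (List.drop_subset _ _ (List.mem_reverse.1 hx))
  have htsum : ∀ p, (d.take p).sum + (d.drop p).sum = d.sum := by
    intro p; rw [← List.sum_append, List.take_append_drop]
  have hkey : {IJ : Finset ℕ × Finset ℕ | IsGIType r IJ.1 IJ.2 ∧ Phi r IJ.1 IJ.2 = d} =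
      ↑(((Finset.range (d.length + 1)).filter
        (fun p => (d.take p).sum ≤ r ∧ (d.drop p).sum ≤ r)).image f) := by
    ext ⟨I, J⟩
    simp only [Set.mem_setOf_eq, Finset.coe_image, Set.mem_image, Finset.mem_coe,
      Finset.mem_filter, Finset.mem_range]
    constructor
    · rintro ⟨⟨hIr, hJr, hmin⟩, hPhi⟩
      have hImem : ∀ y ∈ I.sort (· ≤ ·), y < r := fun y hy =>
        Finset.mem_range.1 (hIr ((Finset.mem_sort (α := ℕ) (· ≤ ·)).1 hy))
      have hJmem : ∀ y ∈ J.sort (· ≤ ·), y < r := fun y hy =>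
        Finset.mem_range.1 (hJr ((Finset.mem_sort (α := ℕ) (· ≤ ·)).1 hy))
      set p := I.card with hp
      have hlenI : (diffs r I).length = p := by
        rw [diffs_eq, dl_length, Finset.length_sort]
      have htake : d.take p = diffs r I := by
        rw [← hPhi, Phi, List.take_left' hlenI]
      have hdrop : d.drop p = (diffs r J).reverse := by
        rw [← hPhi, Phi, List.drop_left' hlenI]
      refine ⟨p, ⟨?_, ?_, ?_⟩, ?_⟩
      · have h1 : (d.take p).length = min p d.length := List.length_take
        rw [htake, hlenI] at h1
        omega
      · rw [htake, diffs_eq, dl_sum r _ ((Finset.sortedLT_sort I).pairwise) hImem]; omega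
      · rw [hdrop, List.sum_reverse, diffs_eq, dl_sum r _ ((Finset.sortedLT_sort J).pairwise) hJmem]
        omega
      · have hI : (sl r (d.take p)).toFinset = I := by
          rw [htake, diffs_eq, sl_dl r _ ((Finset.sortedLT_sort I).pairwise) hImem, Finset.sort_toFinset]
        have hJ : (sl r ((d.drop p).reverse)).toFinset = J := by
          rw [hdrop, List.reverse_reverse, diffs_eq, sl_dl r _ ((Finset.sortedLT_sort J).pairwise) hJmem,
            Finset.sort_toFinset]
        simp [hf, hI, hJ]
    · rintro ⟨p, ⟨hp1, hts, hds⟩, hfp⟩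
      have hds' : ((d.drop p).reverse).sum ≤ r := by rwa [List.sum_reverse]
      have hI : (sl r (d.take p)).toFinset = I := congrArg Prod.fst hfp
      have hJ : (sl r ((d.drop p).reverse)).toFinset = J := congrArg Prod.snd hfp
      subst hI hJ
      refine ⟨⟨subset_sl r _ (htakepos p) hts, subset_sl r _ (hdroppos p) hds', ?_⟩, ?_⟩
      · rw [minD_sl r _ hts, minD_sl r _ hds', List.sum_reverse]
        have := htsum p; omega
      · rw [Phi, diffs_sl r _ (htakepos p) hts, diffs_sl r _ (hdroppos p) hds',
          List.reverse_reverse, List.take_append_drop]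
  rw [hkey, Set.ncard_coe_finset]
  apply Finset.card_image_of_injOn
  intro p hp q hq hpq
  simp only [Finset.coe_filter, Set.mem_setOf_eq, Finset.mem_range] at hp hq
  have h1 : (f p).1.card = p := by
    simp only [hf]
    rw [card_sl r _ (htakepos p) hp.2.1, List.length_take]
    omega
  have h2 : (f q).1.card = q := by
    simp only [hf]
    rw [card_sl r _ (htakepos q) hq.2.1, List.length_take]
    omega
  rw [← h1, ← h2, hpq]
end
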